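/- Let λ > 0, R > 0, H ≥ 0, T₀ > 0 and ω > 0. For a scatterer at (x,y) ∈ ℝ², the Nyquist no-aliasing condition |D_f(x,y;Φ)| ≤ 1/(2T₀) holds for every azimuth angle Φ ∈ ℝ if and only if √(x² + y²) ≤ (λ/(4 ω T₀))·√(1 + H²/R²). In particular, the unambiguous imaging region is the closed disk of radius (λ/(4 ω T₀))·√(1 + H²/R²) centered at the origin. (Proposition 2, Unambiguous Imaging Region.) -/

import Mathlib

open Real

/-- **Proposition 2 (Unambiguous Imaging Region).**
The Nyquist no-aliasing condition `|D_f(x,y;Φ)| ≤ 1/(2T₀)` holds for every azimuth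
angle `Φ` if and only if the scatterer lies in the closed disk
`√(x² + y²) ≤ (λ/(4ωT₀))·√(1 + H²/R²)`. -/
theorem unambiguous_imaging_region
    (lam R H T₀ ω : ℝ) (hlam : 0 < lam) (hR : 0 < R) (hH : 0 ≤ H)
    (hT₀ : 0 < T₀) (hω : 0 < ω) (x y : ℝ) :
    (∀ Φ : ℝ,
        |(2 * ω / lam) * (1 / Real.sqrt (1 + H ^ 2 / R ^ 2)) *
            (-x * Real.sin Φ + y * Real.cos Φ)| ≤ 1 / (2 * T₀)) ↔
      Real.sqrt (x ^ 2 + y ^ 2) ≤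
        (lam / (4 * ω * T₀)) * Real.sqrt (1 + H ^ 2 / R ^ 2) := by
  set S := Real.sqrt (1 + H ^ 2 / R ^ 2) with hSdef
  have hSpos : 0 < S := Real.sqrt_pos.mpr (by positivity)
  set r := Real.sqrt (x ^ 2 + y ^ 2) with hrdef
  have hr0 : 0 ≤ r := Real.sqrt_nonneg _
  have hr2 : r ^ 2 = x ^ 2 + y ^ 2 := Real.sq_sqrt (by positivity)
  have key : (2 * ω / lam * (1 / S) * r ≤ 1 / (2 * T₀)) ↔
      r ≤ lam / (4 * ω * T₀) * S := by
    rw [show 2 * ω / lam * (1 / S) * r = (2 * ω * r) / (lam * S) by ring,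
      div_le_div_iff₀ (by positivity) (by positivity),
      show lam / (4 * ω * T₀) * S = (lam * S) / (4 * ω * T₀) by ring,
      le_div_iff₀ (by positivity)]
    constructor <;> intro h <;> nlinarith
  constructor
  · intro h
    rcases eq_or_lt_of_le hr0 with hr | hrpos
    · have : (0:ℝ) ≤ lam / (4 * ω * T₀) * S := by positivity
      simpa [← hr] using this
    · -- pick Φ with sin Φ = -x/r, cos Φ = y/r
      have hz : (Complex.mk y (-x)) ≠ 0 := by
        intro hz
        have hy : y = 0 := congrArg Complex.re hz
        have hx : -x = 0 := congrArg Complex.im hz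
        have : r = 0 := by
          rw [hrdef]
          simp [hy, show x = 0 by linarith]
        linarith
      have habs : ‖Complex.mk y (-x)‖ = r := by
        rw [Complex.norm_def, Complex.normSq_mk, hrdef]
        ring_nf
      set Φ := Complex.arg (Complex.mk y (-x)) with hΦ
      have hc : Real.cos Φ = y / r := by
        rw [hΦ, Complex.cos_arg hz, habs]
      have hs : Real.sin Φ = -x / r := by
        rw [hΦ, Complex.sin_arg, habs]
      have he : -x * Real.sin Φ + y * Real.cos Φ = r := by
        rw [hs, hc]
        field_simp
        nlinarith
      have := h Φ
      rw [he] at this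
      have hle : 2 * ω / lam * (1 / S) * r ≤ 1 / (2 * T₀) := by
        calc 2 * ω / lam * (1 / S) * r ≤ |2 * ω / lam * (1 / S) * r| := le_abs_self _
        _ ≤ 1 / (2 * T₀) := this
      exact key.mp hle
  · intro h Φ
    have hbound : |(-x * Real.sin Φ + y * Real.cos Φ)| ≤ r := by
      rw [abs_le]
      constructor <;> nlinarith [Real.sin_sq_add_cos_sq Φ, sq_nonneg (x * Real.cos Φ + y * Real.sin Φ), sq_nonneg (-x * Real.sin Φ + y * Real.cos Φ - r), sq_nonneg (-x * Real.sin Φ + y * Real.cos Φ + r)]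
    have hcpos : 0 ≤ 2 * ω / lam * (1 / S) := by positivity
    rw [abs_mul, abs_of_nonneg hcpos]
    calc 2 * ω / lam * (1 / S) * |(-x * Real.sin Φ + y * Real.cos Φ)|
        ≤ 2 * ω / lam * (1 / S) * r := by
          exact mul_le_mul_of_nonneg_left hbound hcpos
      _ ≤ 1 / (2 * T₀) := key.mpr h
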